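/- Let H be a complex Hilbert space and T : H → H a bounded invertible linear operator with bounded inverse. Suppose there exist bounded linear projections P_s, P_c, P_u on H with P_s + P_c + P_u = id and P_i P_j = 0 for i ≠ j, whose ranges X_s, X_c, X_u are closed, invariant under both T and T^{−1}, with X_c finite-dimensional, and constants M ≥ 1, ε > 0 such that ‖Tⁿ x‖ ≤ M e^{−εn} ‖x‖ for all x ∈ X_s and n ≥ 0, and ‖Tⁿ x‖ ≥ M^{−1} e^{εn} ‖x‖ for all x ∈ X_u and n ≥ 0. Then there do NOT exist constants c, C > 0 such that for every n ∈ ℕ there is a sequence (g_{n,k})_{k∈ℕ} in H with ‖g_{n,k}‖ ≤ 1, g_{n,k} → 0 weakly as k → ∞, ‖Tⁿ g_{n,k}‖ > c and ‖T^{2n} g_{n,k}‖ < C for all k. -/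

import Mathlib

open Filter Topology

lemma findim_weak_null {H : Type*} [NormedAddCommGroup H] [InnerProductSpace ℂ H]
    (E : Submodule ℂ H) [FiniteDimensional ℂ E]
    (v : ℕ → H) (hv : ∀ k, v k ∈ E)
    (hw : ∀ h : H, Tendsto (fun k => (inner ℂ h (v k) : ℂ)) atTop (nhds 0)) :
    Tendsto v atTop (nhds 0) := by
  classical
  let b := stdOrthonormalBasis ℂ E
  have hrep : ∀ k, v k = ∑ i, (inner ℂ ((b i : H)) (v k) : ℂ) • (b i : H) := by
    intro k
    have h1 : (⟨v k, hv k⟩ : E) = ∑ i, b.repr ⟨v k, hv k⟩ i • b i := (b.sum_repr _).symm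
    have h2 := congrArg (E.subtype) h1
    simpa [map_sum, OrthonormalBasis.repr_apply_apply, Submodule.coe_inner] using h2
  have : Tendsto (fun k => ∑ i, (inner ℂ ((b i : H)) (v k) : ℂ) • (b i : H)) atTop (nhds 0) := by
    have h0 : (0 : H) = ∑ i : Fin (Module.finrank ℂ E), (0 : H) := by simp
    rw [h0]
    exact tendsto_finset_sum _ (fun i _ => by
      simpa using (hw ((b i : H))).smul_const ((b i : H)))
  exact this.congr (fun k => (hrep k).symm)

theorem stmt_15 {H : Type*} [NormedAddCommGroup H] [InnerProductSpace ℂ H]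
    [CompleteSpace H]
    (T : H ≃L[ℂ] H)
    (Ps Pc Pu : H →L[ℂ] H)
    (hsum : Ps + Pc + Pu = ContinuousLinearMap.id ℂ H)
    (hsc : Ps.comp Pc = 0) (hcs : Pc.comp Ps = 0)
    (hsu : Ps.comp Pu = 0) (hus : Pu.comp Ps = 0)
    (hcu : Pc.comp Pu = 0) (huc : Pu.comp Pc = 0)
    (hPs : Ps.comp Ps = Ps) (hPc : Pc.comp Pc = Pc) (hPu : Pu.comp Pu = Pu)
    (hsclosed : IsClosed (Set.range Ps)) (hcclosed : IsClosed (Set.range Pc))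
    (huclosed : IsClosed (Set.range Pu))
    (hsT : Set.MapsTo T (Set.range Ps) (Set.range Ps))
    (hsTinv : Set.MapsTo T.symm (Set.range Ps) (Set.range Ps))
    (hcT : Set.MapsTo T (Set.range Pc) (Set.range Pc))
    (hcTinv : Set.MapsTo T.symm (Set.range Pc) (Set.range Pc))
    (huT : Set.MapsTo T (Set.range Pu) (Set.range Pu))
    (huTinv : Set.MapsTo T.symm (Set.range Pu) (Set.range Pu))
    (hfin : FiniteDimensional ℂ (LinearMap.range (Pc : H →ₗ[ℂ] H)))
    (M ε : ℝ) (hM : 1 ≤ M) (hε : 0 < ε)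
    (hstab : ∀ x ∈ Set.range Ps, ∀ n : ℕ,
      ‖((T : H →L[ℂ] H) ^ n) x‖ ≤ M * Real.exp (-(ε * n)) * ‖x‖)
    (hunst : ∀ x ∈ Set.range Pu, ∀ n : ℕ,
      M⁻¹ * Real.exp (ε * n) * ‖x‖ ≤ ‖((T : H →L[ℂ] H) ^ n) x‖) :
    ¬ ∃ c C : ℝ, 0 < c ∧ 0 < C ∧ ∀ n : ℕ, ∃ g : ℕ → H,
        (∀ k, ‖g k‖ ≤ 1) ∧
        (∀ h : H, Filter.Tendsto (fun k => (inner ℂ (g k) h : ℂ)) Filter.atTop (nhds 0)) ∧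
        (∀ k, c < ‖((T : H →L[ℂ] H) ^ n) (g k)‖ ∧
          ‖((T : H →L[ℂ] H) ^ (2 * n)) (g k)‖ < C) := by
  rintro ⟨c, C, hc, hC, hmain⟩
  set S : H →L[ℂ] H := (T : H →L[ℂ] H) with hS
  set A : ℝ := ‖Ps‖ with hA
  have hA0 : 0 ≤ A := norm_nonneg _
  have hM0 : 0 < M := lt_of_lt_of_le one_pos hM
  -- choose n large
  set R : ℝ := max (3*M*(A+1)/c) (3*M*(C + M*A + 1)/c) with hRdef
  obtain ⟨n, hn⟩ := exists_nat_gt (R / ε)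
  set En : ℝ := Real.exp (ε * n) with hEn
  have hEn0 : 0 < En := Real.exp_pos _
  have hRE : R < En := by
    have h1 : R < (n : ℝ) * ε := (div_lt_iff₀ hε).mp hn
    have h2 := Real.add_one_le_exp (ε * n)
    nlinarith
  have hR1 : 3*M*(A+1) < c * En := by
    have := lt_of_le_of_lt (le_max_left _ _) hRE
    rw [div_lt_iff₀ hc] at this; linarith
  have hR2 : 3*M*(C + M*A + 1) < c * En := by
    have := lt_of_le_of_lt (le_max_right _ _) hRE
    rw [div_lt_iff₀ hc] at this; linarith
  -- stable smallness at time n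
  have hsmall : M * Real.exp (-(ε * n)) * A < c / 3 := by
    rw [Real.exp_neg, ← hEn]
    rw [show M * En⁻¹ * A = M * A / En by ring, div_lt_iff₀ hEn0]
    nlinarith
  -- unstable growth
  have hbig : C + M * A + 1 < M⁻¹ * En * (c / 3) := by
    rw [show M⁻¹ * En * (c / 3) = c * En / (3 * M) by field_simp]
    rw [lt_div_iff₀ (by positivity)]
    nlinarith
  obtain ⟨g, hg1, hg2, hg3⟩ := hmain n
  -- Pc (g k) → 0 in norm
  have hPcg : Tendsto (fun k => Pc (g k)) atTop (nhds 0) := by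
    apply findim_weak_null (LinearMap.range (Pc : H →ₗ[ℂ] H))
      (fun k => Pc (g k)) (fun k => LinearMap.mem_range_self _ _)
    intro h
    have h1 := hg2 (ContinuousLinearMap.adjoint Pc h)
    have h2 := (continuous_star.tendsto (0 : ℂ)).comp h1
    rw [star_zero] at h2
    refine Tendsto.congr (fun k => ?_) h2
    show star (inner ℂ (g k) (ContinuousLinearMap.adjoint Pc h) : ℂ) = _
    rw [← ContinuousLinearMap.adjoint_inner_left Pc (g k) h]
    exact inner_conj_symm _ _
  -- invariance of unstable range under powers
  have key : ∀ m : ℕ, ∀ x ∈ Set.range Pu, (S ^ m) x ∈ Set.range Pu := by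
    intro m
    induction m with
    | zero => intro x hx; simpa using hx
    | succ m ih =>
      intro x hx
      have : (S ^ (m + 1)) x = (S ^ m) (S x) := by
        rw [pow_succ]; rfl
      rw [this]
      exact ih _ (huT hx)
  -- splitting
  have hsplit : ∀ x : H, x = Ps x + Pc x + Pu x := by
    intro x
    have := congrFun (congrArg (fun (f : H →L[ℂ] H) => (f : H → H)) hsum) x
    simpa using this.symm
  have hsb : ∀ k, ‖Ps (g k)‖ ≤ A := by
    intro k
    calc ‖Ps (g k)‖ ≤ ‖Ps‖ * ‖g k‖ := Ps.le_opNorm _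
      _ ≤ A * 1 := by apply mul_le_mul_of_nonneg_left (hg1 k) hA0
      _ = A := mul_one A
  -- pick k with T^n Pc g k and T^(2n) Pc g k small
  have htend : ∀ m : ℕ, Tendsto (fun k => ‖(S ^ m) (Pc (g k))‖) atTop (nhds 0) := by
    intro m
    have h1 : Tendsto (fun k => (S ^ m) (Pc (g k))) atTop (nhds 0) := by
      have := ((S ^ m).continuous.tendsto 0).comp hPcg
      rw [map_zero] at this; exact this
    simpa using h1.norm
  have hev1 : ∀ᶠ k in atTop, ‖(S ^ n) (Pc (g k))‖ < c / 3 :=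
    (htend n).eventually_lt_const (by positivity)
  have hev2 : ∀ᶠ k in atTop, ‖(S ^ (2 * n)) (Pc (g k))‖ < 1 :=
    (htend (2 * n)).eventually_lt_const one_pos
  obtain ⟨k, hk1, hk2⟩ := (hev1.and hev2).exists
  obtain ⟨hgc, hgC⟩ := hg3 k
  set x := g k with hx
  -- norm estimates at time n
  have hsn : ‖(S ^ n) (Ps x)‖ < c / 3 := by
    have h1 := hstab (Ps x) ⟨x, rfl⟩ n
    have h2 : M * Real.exp (-(ε * n)) * ‖Ps x‖ ≤ M * Real.exp (-(ε * n)) * A :=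
      mul_le_mul_of_nonneg_left (hsb k) (by positivity)
    linarith
  have hsplit1 : (S ^ n) x = (S ^ n) (Ps x) + (S ^ n) (Pc x) + (S ^ n) (Pu x) := by
    conv_lhs => rw [hsplit x]
    simp [map_add]
  have htri1 : ‖(S ^ n) x‖ ≤ ‖(S ^ n) (Ps x)‖ + ‖(S ^ n) (Pc x)‖ + ‖(S ^ n) (Pu x)‖ := by
    rw [hsplit1]
    exact norm_add₃_le
  have hun : c / 3 < ‖(S ^ n) (Pu x)‖ := by
    have := hgc
    linarith [hk1]
  -- time 2n
  have h2n : (S ^ (2 * n)) (Pu x) = (S ^ n) ((S ^ n) (Pu x)) := by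
    rw [two_mul, pow_add]; rfl
  have hu2 : C + M * A + 1 < ‖(S ^ (2 * n)) (Pu x)‖ := by
    rw [h2n]
    have h1 := hunst ((S ^ n) (Pu x)) (key n (Pu x) ⟨x, rfl⟩) n
    have h2 : M⁻¹ * En * (c / 3) ≤ M⁻¹ * En * ‖(S ^ n) (Pu x)‖ :=
      mul_le_mul_of_nonneg_left (le_of_lt hun) (by positivity)
    rw [← hEn] at h1
    linarith
  have hs2 : ‖(S ^ (2 * n)) (Ps x)‖ ≤ M * A := by
    have h1 := hstab (Ps x) ⟨x, rfl⟩ (2 * n)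
    have hle : Real.exp (-(ε * (2 * n : ℕ))) ≤ 1 := by
      rw [Real.exp_le_one_iff, neg_nonpos]
      positivity
    have h2 : M * Real.exp (-(ε * (2 * n : ℕ))) * ‖Ps x‖ ≤ M * Real.exp (-(ε * (2 * n : ℕ))) * A :=
      mul_le_mul_of_nonneg_left (hsb k) (by positivity)
    have h3 : M * Real.exp (-(ε * (2 * n : ℕ))) * A ≤ M * 1 * A :=
      mul_le_mul_of_nonneg_right (mul_le_mul_of_nonneg_left hle hM0.le) hA0
    rw [mul_one] at h3
    linarith
  have hxu : Pu x = x - Ps x - Pc x := by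
    rw [eq_sub_iff_add_eq, eq_sub_iff_add_eq]
    conv_rhs => rw [hsplit x]
    abel
  have hsplit2 : (S ^ (2 * n)) (Pu x) =
      (S ^ (2 * n)) x - (S ^ (2 * n)) (Ps x) - (S ^ (2 * n)) (Pc x) := by
    rw [hxu]
    simp [map_sub]
  have htri2 : ‖(S ^ (2 * n)) (Pu x)‖ ≤
      ‖(S ^ (2 * n)) x‖ + ‖(S ^ (2 * n)) (Ps x)‖ + ‖(S ^ (2 * n)) (Pc x)‖ := by
    rw [hsplit2]
    calc ‖(S ^ (2*n)) x - (S ^ (2*n)) (Ps x) - (S ^ (2*n)) (Pc x)‖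
        ≤ ‖(S ^ (2*n)) x - (S ^ (2*n)) (Ps x)‖ + ‖(S ^ (2*n)) (Pc x)‖ := norm_sub_le _ _
      _ ≤ ‖(S ^ (2*n)) x‖ + ‖(S ^ (2*n)) (Ps x)‖ + ‖(S ^ (2*n)) (Pc x)‖ := by
          linarith [norm_sub_le ((S ^ (2*n)) x) ((S ^ (2*n)) (Ps x))]
  linarith [hk2]
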